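/- Let $\alpha_1>\alpha_2>-2$ with $\alpha_1>-1$, and let $\varphi\in C_c^\infty(B,[0,1])$ be radial with $\varphi\equiv1$ on $\{|x|\le1/3\}$ and $\varphi\equiv0$ on $\{|x|\ge2/3\}$. Set $u_{\epsilon,\alpha_1}=\varphi\,U_{\epsilon,\alpha_1}$ and $\tilde K:=\int_{\mathbb{R}^3}|x|^{\alpha_2}\,U_{1,\alpha_1}^{\,6+2\alpha_2}\,dx$. Then $\tilde K$ is finite and, as $\epsilon\to0^+$, $\int_B|x|^{\alpha_2}\,|u_{\epsilon,\alpha_1}|^{6+2\alpha_2}\,dx \;=\; \tilde K+O\left(\epsilon^{3+\alpha_2}\right).$ -/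

import Mathlib

open MeasureTheory Real Asymptotics
open scoped ENNReal NNReal

/-- `ℝ³` as a Euclidean space. -/
abbrev E3 := EuclideanSpace ℝ (Fin 3)

private lemma E3.frk : Module.finrank ℝ E3 = 3 := finrank_euclideanSpace_fin

open Set Metric in
private lemma lintegral_radial_E3 (F : ℝ → ℝ≥0∞) (hF : Measurable F) :
    ∫⁻ x : E3, F ‖x‖ =
      (∫⁻ r in Ioi (0 : ℝ), ENNReal.ofReal (r ^ 2) * F r) *
        (3 * volume (ball (0 : E3) 1)) := by
  have hmp := (volume : Measure E3).measurePreserving_homeomorphUnitSphereProd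
  have hmeasF : Measurable fun p : sphere (0:E3) 1 × Ioi (0:ℝ) => F p.2.1 :=
    hF.comp (measurable_subtype_coe.comp measurable_snd)
  have h3 := hmp.lintegral_comp hmeasF
  simp only [homeomorphUnitSphereProd_apply_snd_coe] at h3
  have h5 : ∫⁻ r : Ioi (0:ℝ), F r.1
        ∂(Measure.volumeIoiPow (Module.finrank ℝ E3 - 1))
      = ∫⁻ r in Ioi (0:ℝ), ENNReal.ofReal (r ^ 2) * F r := by
    have e0 : (Measure.volumeIoiPow (Module.finrank ℝ E3 - 1))
        = (Measure.comap Subtype.val volume).withDensity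
            (fun r : Ioi (0:ℝ) => ENNReal.ofReal (r.1 ^ (Module.finrank ℝ E3 - 1))) := rfl
    rw [e0, lintegral_withDensity_eq_lintegral_mul _
      (show Measurable fun r : Ioi (0:ℝ) =>
          ENNReal.ofReal (r.1 ^ (Module.finrank ℝ E3 - 1)) from
        (measurable_subtype_coe.pow_const _).ennreal_ofReal)
      (show Measurable fun r : Ioi (0:ℝ) => F r.1 from hF.comp measurable_subtype_coe)]
    have e1 := lintegral_subtype_comap (μ := (volume : Measure ℝ)) (s := Ioi (0:ℝ))
      measurableSet_Ioi (fun r : ℝ => ENNReal.ofReal (r ^ 2) * F r)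
    rw [← e1]
    refine lintegral_congr fun r => ?_
    simp only [Pi.mul_apply, E3.frk]
  calc ∫⁻ x : E3, F ‖x‖
      = ∫⁻ x in ({0}ᶜ : Set E3), F ‖x‖ ∂volume := by
        rw [restrict_compl_singleton]
    _ = ∫⁻ x : ({0}ᶜ : Set E3), F ‖(x : E3)‖ ∂(volume.comap Subtype.val) :=
        (lintegral_subtype_comap (measurableSet_singleton 0).compl _).symm
    _ = ∫⁻ p : sphere (0:E3) 1 × Ioi (0:ℝ), F p.2.1
          ∂((volume : Measure E3).toSphere.prod
            (.volumeIoiPow (Module.finrank ℝ E3 - 1))) := h3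
    _ = ∫⁻ _θ : sphere (0:E3) 1, (∫⁻ r : Ioi (0:ℝ), F r.1
          ∂(Measure.volumeIoiPow (Module.finrank ℝ E3 - 1)))
          ∂(volume : Measure E3).toSphere :=
        lintegral_prod _ hmeasF.aemeasurable
    _ = _ := by
        rw [h5, lintegral_const, Measure.toSphere_apply_univ, E3.frk]
        norm_num

open Set Metric in
private lemma integrableOn_rpow_ball {a : ℝ} (ha : -2 < a) :
    IntegrableOn (fun x : E3 => ‖x‖ ^ a) (ball (0 : E3) 1) := by
  have hmeas : Measurable fun x : E3 => ‖x‖ ^ a := by fun_prop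
  constructor
  · exact hmeas.aestronglyMeasurable.restrict
  · rw [hasFiniteIntegral_iff_ofReal
      (Filter.Eventually.of_forall fun x => rpow_nonneg (norm_nonneg x) a)]
    set F : ℝ → ℝ≥0∞ := fun r => (Iio (1:ℝ)).indicator (fun r => ENNReal.ofReal (r ^ a)) r
      with hF
    have hFmeas : Measurable F := by
      refine Measurable.indicator ?_ measurableSet_Iio
      exact (show Measurable fun r : ℝ => r ^ a by fun_prop).ennreal_ofReal
    have key : ∫⁻ x in ball (0:E3) 1, ENNReal.ofReal (‖x‖ ^ a) = ∫⁻ x : E3, F ‖x‖ := by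
      rw [← lintegral_indicator measurableSet_ball]
      refine lintegral_congr fun x => ?_
      by_cases hx : ‖x‖ < 1 <;>
        simp [hF, Set.indicator_apply, hx, mem_ball_zero_iff]
    rw [key, lintegral_radial_E3 F hFmeas]
    refine ENNReal.mul_lt_top ?_ ?_
    · calc ∫⁻ r in Ioi (0:ℝ), ENNReal.ofReal (r ^ 2) * F r
          ≤ ∫⁻ r in Ioi (0:ℝ), (Iio (1:ℝ)).indicator (fun _ => (1:ℝ≥0∞)) r := by
            refine setLIntegral_mono (measurable_const.indicator measurableSet_Iio)
              fun r hr => ?_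
            by_cases h1 : r < 1
            · simp only [hF, Set.indicator_apply, mem_Iio, h1, if_true]
              rw [← ENNReal.ofReal_mul (by positivity)]
              have hr0 : (0:ℝ) < r := hr
              have hle : r ^ (2:ℕ) * r ^ a ≤ 1 := by
                have e2 : r ^ (2:ℕ) * r ^ a = r ^ ((2:ℕ) + a : ℝ) := by
                  rw [← Real.rpow_natCast r 2, ← Real.rpow_add hr0]
                rw [e2]
                refine Real.rpow_le_one hr0.le h1.le ?_
                push_cast; linarith
              calc ENNReal.ofReal (r ^ 2 * r ^ a) ≤ ENNReal.ofReal 1 :=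
                    ENNReal.ofReal_le_ofReal hle
                _ = 1 := ENNReal.ofReal_one
            · simp [hF, Set.indicator_apply, h1]
        _ = volume (Iio (1:ℝ) ∩ Ioi 0) := by
            rw [lintegral_indicator_const measurableSet_Iio, one_mul,
              Measure.restrict_apply measurableSet_Iio]
        _ < ⊤ := by
            rw [Set.Iio_inter_Ioi, Real.volume_Ioo]
            exact ENNReal.ofReal_lt_top
    · exact ENNReal.mul_lt_top (by norm_num) measure_ball_lt_top

open Set Metric in
private lemma tail_rpow_E3 {t R : ℝ} (ht : t < -3) (hR : 0 < R) :
    IntegrableOn (fun x : E3 => ‖x‖ ^ t) {x : E3 | R ≤ ‖x‖} ∧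
      ∫ x in {x : E3 | R ≤ ‖x‖}, ‖x‖ ^ t =
        3 * (volume (ball (0 : E3) 1)).toReal * (-R ^ (t + 3) / (t + 3)) := by
  have ht2 : t + 2 < -1 := by linarith
  have hset : MeasurableSet {x : E3 | R ≤ ‖x‖} :=
    measurableSet_le measurable_const measurable_norm
  have hmeas : Measurable fun x : E3 => ‖x‖ ^ t := by fun_prop
  have h1d : IntegrableOn (fun r : ℝ => r ^ (t + 2)) (Ioi R) :=
    integrableOn_Ioi_rpow_of_lt ht2 hR
  have hint : IntegrableOn (fun x : E3 => ‖x‖ ^ t) {x : E3 | R ≤ ‖x‖} := by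
    refine ⟨hmeas.aestronglyMeasurable.restrict, ?_⟩
    rw [hasFiniteIntegral_iff_ofReal
      (Filter.Eventually.of_forall fun x => rpow_nonneg (norm_nonneg _) t)]
    set F : ℝ → ℝ≥0∞ := fun r => (Ici R).indicator (fun r => ENNReal.ofReal (r ^ t)) r
      with hF
    have hFmeas : Measurable F := by
      refine Measurable.indicator ?_ measurableSet_Ici
      exact (show Measurable fun r : ℝ => r ^ t by fun_prop).ennreal_ofReal
    have key : ∫⁻ x in {x : E3 | R ≤ ‖x‖}, ENNReal.ofReal (‖x‖ ^ t)
        = ∫⁻ x : E3, F ‖x‖ := by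
      rw [← lintegral_indicator hset]
      refine lintegral_congr fun x => ?_
      by_cases hx : R ≤ ‖x‖ <;>
        simp [hF, Set.indicator_apply, hx]
    rw [key, lintegral_radial_E3 F hFmeas]
    refine ENNReal.mul_lt_top ?_ (ENNReal.mul_lt_top (by norm_num) measure_ball_lt_top)
    have hGint : Integrable (fun r : ℝ => (Ici R).indicator (fun r : ℝ => r ^ (t + 2)) r)
        (volume.restrict (Ioi (0:ℝ))) := by
      rw [integrable_indicator_iff measurableSet_Ici]
      have h2 : IntegrableOn (fun r : ℝ => r ^ (t+2)) (Ici R) volume := by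
        rw [integrableOn_Ici_iff_integrableOn_Ioi]; exact h1d
      exact h2.mono_measure Measure.restrict_le_self
    calc ∫⁻ r in Ioi (0:ℝ), ENNReal.ofReal (r ^ 2) * F r
        ≤ ∫⁻ r in Ioi (0:ℝ),
            ENNReal.ofReal ((Ici R).indicator (fun r : ℝ => r ^ (t+2)) r) := by
          refine setLIntegral_mono
            ((Measurable.indicator (by fun_prop) measurableSet_Ici).ennreal_ofReal)
            fun r hr => ?_
          have hr0 : (0:ℝ) < r := hr
          by_cases hrR : R ≤ r
          · simp only [hF, Set.indicator_apply, mem_Ici, hrR, if_true]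
            rw [← ENNReal.ofReal_mul (by positivity)]
            refine ENNReal.ofReal_le_ofReal (le_of_eq ?_)
            rw [← Real.rpow_natCast r 2, ← Real.rpow_add hr0]
            norm_num
            rw [add_comm]
          · simp [hF, Set.indicator_apply, hrR]
      _ < ⊤ := hGint.lintegral_lt_top
  refine ⟨hint, ?_⟩
  have h0 : ∫ x in {x : E3 | R ≤ ‖x‖}, ‖x‖ ^ t
      = ∫ x : E3, (Ici R).indicator (fun s : ℝ => s ^ t) ‖x‖ := by
    rw [← integral_indicator hset]
    refine integral_congr_ae (Filter.Eventually.of_forall fun x => ?_)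
    by_cases hx : R ≤ ‖x‖ <;>
      simp [Set.indicator_apply, hx]
  rw [h0, MeasureTheory.integral_fun_norm_addHaar (volume : Measure E3)
    (fun r : ℝ => (Ici R).indicator (fun s : ℝ => s ^ t) r), E3.frk]
  have h1 : ∫ y in Ioi (0:ℝ), y ^ (3-1 : ℕ) • (Ici R).indicator (fun s : ℝ => s ^ t) y
      = ∫ y in Ioi R, y ^ (t+2) := by
    have e1 : ∀ y : ℝ, y ^ (3-1 : ℕ) • (Ici R).indicator (fun s : ℝ => s ^ t) y
        = (Ici R).indicator (fun s : ℝ => s ^ (2:ℕ) * s ^ t) y := by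
      intro y
      by_cases hy : y ∈ Ici R <;>
        simp [Set.indicator_apply, hy, smul_eq_mul]
    simp only [e1]
    rw [setIntegral_indicator measurableSet_Ici,
      inter_eq_self_of_subset_right
        (show Ici R ⊆ Ioi (0:ℝ) from fun y hy => lt_of_lt_of_le hR hy),
      integral_Ici_eq_integral_Ioi]
    refine setIntegral_congr_fun measurableSet_Ioi fun y hy => ?_
    have hy0 : (0:ℝ) < y := lt_trans hR hy
    rw [← Real.rpow_natCast y 2, ← Real.rpow_add hy0]
    norm_num
    rw [add_comm]
  rw [h1, integral_Ioi_rpow_of_lt ht2 hR,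
    show t + 2 + 1 = t + 3 by ring]
  simp only [nsmul_eq_mul, smul_eq_mul]
  rw [measureReal_def]
  norm_num
  ring

/-- For the truncated bubble `u_{ε,α₁} = φ U_{ε,α₁}` and
`K̃ = ∫_{ℝ³} |x|^{α₂} U_{1,α₁}^{6+2α₂}`, the constant `K̃` is finite and
`∫_B |x|^{α₂} |u_{ε,α₁}|^{6+2α₂} = K̃ + O(ε^{3+α₂})` as `ε → 0⁺`. -/
theorem stmt6 (a1 a2 : ℝ) (ha2 : -2 < a2) (h21 : a2 < a1) (ha1 : -1 < a1)
    (φ : E3 → ℝ) (hφs : ContDiff ℝ (⊤ : ℕ∞) φ) (hφc : HasCompactSupport φ)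
    (hφsub : tsupport φ ⊆ Metric.ball (0 : E3) 1)
    (hφb : ∀ x : E3, φ x ∈ Set.Icc (0 : ℝ) 1)
    (hφrad : ∀ x y : E3, ‖x‖ = ‖y‖ → φ x = φ y)
    (hφ1 : ∀ x : E3, ‖x‖ ≤ 1 / 3 → φ x = 1)
    (hφ0 : ∀ x : E3, 2 / 3 ≤ ‖x‖ → φ x = 0)
    (u : ℝ → E3 → ℝ)
    (hu : ∀ (ε : ℝ) (x : E3), u ε x = φ x * ((3 + a1) ^ (1 / (4 + 2 * a1)) * ε ^ ((1 : ℝ) / 2) /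
      (ε ^ (2 + a1) + ‖x‖ ^ (2 + a1)) ^ (1 / (2 + a1))))
    (U1 : E3 → ℝ)
    (hU1 : ∀ x : E3, U1 x = (3 + a1) ^ (1 / (4 + 2 * a1)) / (1 + ‖x‖ ^ (2 + a1)) ^ (1 / (2 + a1)))
    (K : ℝ) (hK : K = ∫ x : E3, ‖x‖ ^ a2 * U1 x ^ (6 + 2 * a2)) :
    Integrable (fun x : E3 => ‖x‖ ^ a2 * U1 x ^ (6 + 2 * a2)) ∧
    (fun ε : ℝ => (∫ x in Metric.ball (0 : E3) 1, ‖x‖ ^ a2 * |u ε x| ^ (6 + 2 * a2)) - K)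
      =O[nhdsWithin 0 (Set.Ioi 0)] (fun ε : ℝ => ε ^ (3 + a2)) := by
  have hb : (0:ℝ) < 2 + a1 := by linarith
  have hp0 : (0:ℝ) < 6 + 2 * a2 := by linarith
  set c : ℝ := (3 + a1) ^ (1 / (4 + 2 * a1)) with hcdef
  have hc : 0 < c := Real.rpow_pos_of_pos (by linarith) _
  set p : ℝ := 6 + 2 * a2 with hpdef
  set b : ℝ := 2 + a1 with hbdef
  set t : ℝ := a2 - p with htdef
  have ht3 : t < -3 := by rw [htdef, hpdef]; linarith
  -- basic facts about the profile
  have hDpos : ∀ x : E3, 0 < (1 + ‖x‖ ^ b) ^ (1/b) := by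
    intro x
    have := Real.rpow_nonneg (norm_nonneg x) b
    exact Real.rpow_pos_of_pos (by linarith) _
  have hD1 : ∀ x : E3, 1 ≤ (1 + ‖x‖ ^ b) ^ (1/b) := by
    intro x
    have h1 := Real.rpow_nonneg (norm_nonneg x) b
    have h2 := Real.rpow_le_rpow zero_le_one
      (show (1:ℝ) ≤ 1 + ‖x‖ ^ b by linarith) (div_nonneg zero_le_one hb.le)
    rwa [Real.one_rpow] at h2
  have hDx : ∀ x : E3, ‖x‖ ≤ (1 + ‖x‖ ^ b) ^ (1/b) := by
    intro x
    have h1 : ‖x‖ = (‖x‖ ^ b) ^ (1/b) := by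
      rw [← Real.rpow_mul (norm_nonneg x), mul_one_div_cancel (ne_of_gt hb), Real.rpow_one]
    have h2 := Real.rpow_nonneg (norm_nonneg x) b
    calc ‖x‖ = (‖x‖ ^ b) ^ (1/b) := h1
      _ ≤ (1 + ‖x‖ ^ b) ^ (1/b) :=
          Real.rpow_le_rpow h2 (by linarith) (div_nonneg zero_le_one hb.le)
  have hU1pos : ∀ x : E3, 0 < U1 x := by
    intro x; rw [hU1]; exact div_pos hc (hDpos x)
  have hU1c : ∀ x : E3, U1 x ≤ c := by
    intro x; rw [hU1]; exact div_le_self hc.le (hD1 x)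
  have hU1x : ∀ x : E3, 0 < ‖x‖ → U1 x ≤ c / ‖x‖ := by
    intro x hx; rw [hU1]
    exact div_le_div_of_nonneg_left hc.le hx (hDx x)
  set g : E3 → ℝ := fun x : E3 => ‖x‖ ^ a2 * U1 x ^ p with hgdef
  have hU1eq : U1 = fun x : E3 => c / (1 + ‖x‖ ^ b) ^ (1/b) := funext hU1
  have hgmeas : Measurable g := by
    rw [hgdef, hU1eq]; fun_prop
  have hgnn : ∀ x : E3, 0 ≤ g x := fun x =>
    mul_nonneg (Real.rpow_nonneg (norm_nonneg x) a2) (Real.rpow_nonneg (hU1pos x).le p)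
  -- integrability of g
  have hbound1 : ∀ x : E3, ‖g x‖ ≤ c ^ p * ‖x‖ ^ a2 := by
    intro x
    rw [Real.norm_eq_abs, abs_of_nonneg (hgnn x)]
    calc g x = ‖x‖ ^ a2 * U1 x ^ p := rfl
      _ ≤ ‖x‖ ^ a2 * c ^ p :=
          mul_le_mul_of_nonneg_left
            (Real.rpow_le_rpow (hU1pos x).le (hU1c x) hp0.le)
            (Real.rpow_nonneg (norm_nonneg x) a2)
      _ = c ^ p * ‖x‖ ^ a2 := mul_comm _ _
  have hgball : IntegrableOn g (Metric.ball (0:E3) 1) :=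
    ((integrableOn_rpow_ball (show (-2:ℝ) < a2 from ha2)).const_mul (c ^ p)).mono'
      hgmeas.aestronglyMeasurable.restrict
      (Filter.Eventually.of_forall fun x => hbound1 x)
  have hgtail : ∀ x : E3, 0 < ‖x‖ → g x ≤ c ^ p * ‖x‖ ^ t := by
    intro x hx
    have h1 : U1 x ^ p ≤ (c / ‖x‖) ^ p :=
      Real.rpow_le_rpow (hU1pos x).le (hU1x x hx) hp0.le
    calc g x ≤ ‖x‖ ^ a2 * (c / ‖x‖) ^ p :=
          mul_le_mul_of_nonneg_left h1 (Real.rpow_nonneg (norm_nonneg x) a2)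
      _ = c ^ p * ‖x‖ ^ t := by
          rw [Real.div_rpow hc.le (norm_nonneg x), htdef, Real.rpow_sub hx]
          ring
  have hMint : Integrable (fun x : E3 => (1 + ‖x‖) ^ (-(6 + a2))) (volume : Measure E3) := by
    refine integrable_one_add_norm ?_
    rw [E3.frk]; push_cast; linarith
  have htail2 : ∀ x : E3, 1 ≤ ‖x‖ → ‖x‖ ^ t ≤ 2 ^ (6+a2) * (1+‖x‖) ^ (-(6 + a2)) := by
    intro x hx
    have hxpos : (0:ℝ) < ‖x‖ := lt_of_lt_of_le one_pos hx
    have hs0 : (0:ℝ) ≤ 6 + a2 := by linarith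
    have he : t = -(6 + a2) := by rw [htdef, hpdef]; ring
    rw [he, Real.rpow_neg hxpos.le, Real.rpow_neg (by linarith : (0:ℝ) ≤ 1 + ‖x‖),
      ← div_eq_mul_inv, ← one_div, div_le_div_iff₀ (by positivity) (by positivity)]
    have h2 : (1 + ‖x‖) ^ (6+a2) ≤ 2 ^ (6+a2) * ‖x‖ ^ (6+a2) := by
      rw [← Real.mul_rpow (by norm_num) hxpos.le]
      exact Real.rpow_le_rpow (by linarith) (by linarith) hs0
    linarith
  have hgcompl : IntegrableOn g (Metric.ball (0:E3) 1)ᶜ := by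
    refine ((hMint.const_mul (c ^ p * 2 ^ (6+a2))).integrableOn).mono'
      hgmeas.aestronglyMeasurable.restrict ?_
    rw [ae_restrict_iff' measurableSet_ball.compl]
    refine Filter.Eventually.of_forall fun x hx => ?_
    have hx1 : 1 ≤ ‖x‖ := by
      by_contra h
      exact hx (mem_ball_zero_iff.2 (lt_of_not_ge h))
    rw [Real.norm_eq_abs, abs_of_nonneg (hgnn x)]
    calc g x ≤ c ^ p * ‖x‖ ^ t := hgtail x (by linarith)
      _ ≤ c ^ p * (2 ^ (6+a2) * (1+‖x‖) ^ (-(6 + a2))) :=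
          mul_le_mul_of_nonneg_left (htail2 x hx1) (by positivity)
      _ = c ^ p * 2 ^ (6+a2) * (1+‖x‖) ^ (-(6 + a2)) := by ring
  have hgint : Integrable g (volume : Measure E3) := by
    have h := hgball.union hgcompl
    rwa [Set.union_compl_self, integrableOn_univ] at h
  -- scaling identity
  have hscale : ∀ ε : ℝ, 0 < ε →
      (∫ x in Metric.ball (0:E3) 1, ‖x‖ ^ a2 * |u ε x| ^ p)
        = ∫ y : E3, φ (ε • y) ^ p * g y := by
    intro ε hε
    have h1 : (∫ x in Metric.ball (0:E3) 1, ‖x‖ ^ a2 * |u ε x| ^ p)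
        = ∫ x : E3, ‖x‖ ^ a2 * |u ε x| ^ p := by
      refine setIntegral_eq_integral_of_forall_compl_eq_zero fun x hx => ?_
      have hx1 : (2:ℝ)/3 ≤ ‖x‖ := by
        have h2 : 1 ≤ ‖x‖ := by
          by_contra h
          exact hx (mem_ball_zero_iff.2 (lt_of_not_ge h))
        linarith
      rw [hu, hφ0 x hx1, zero_mul, abs_zero, Real.zero_rpow (ne_of_gt hp0), mul_zero]
    rw [h1]
    have h2 := Measure.integral_comp_smul_of_nonneg (volume : Measure E3)
      (fun x : E3 => ‖x‖ ^ a2 * |u ε x| ^ p) ε (hR := hε.le)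
    have hε3 : (0:ℝ) < ε ^ Module.finrank ℝ E3 := by positivity
    have h3 : ∫ x : E3, ‖x‖ ^ a2 * |u ε x| ^ p
        = (ε ^ Module.finrank ℝ E3) • ∫ x : E3, ‖ε • x‖ ^ a2 * |u ε (ε • x)| ^ p := by
      rw [h2, smul_smul, mul_inv_cancel₀ hε3.ne', one_smul]
    rw [h3, smul_eq_mul, ← integral_const_mul]
    refine integral_congr_ae (Filter.Eventually.of_forall fun y => ?_)
    have hN : ‖ε • y‖ = ε * ‖y‖ := by
      rw [norm_smul, Real.norm_eq_abs, abs_of_pos hε]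
    have hDy : 0 < (1 + ‖y‖ ^ b) ^ (1/b) := hDpos y
    have hden : (ε ^ b + ‖ε • y‖ ^ b) ^ (1/b) = ε * (1 + ‖y‖ ^ b) ^ (1/b) := by
      rw [hN, Real.mul_rpow hε.le (norm_nonneg y),
        show ε ^ b + ε ^ b * ‖y‖ ^ b = ε ^ b * (1 + ‖y‖ ^ b) by ring,
        Real.mul_rpow (Real.rpow_nonneg hε.le b)
          (by have := Real.rpow_nonneg (norm_nonneg y) b; linarith)]
      congr 1
      rw [← Real.rpow_mul hε.le, mul_one_div_cancel (ne_of_gt hb), Real.rpow_one]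
    have hueq : u ε (ε • y) = φ (ε • y) * (ε ^ (-(1:ℝ)/2) * U1 y) := by
      rw [hu, hden, hU1 y]
      congr 1
      rw [show (-(1:ℝ)/2) = (1:ℝ)/2 + (-1) by norm_num, Real.rpow_add hε,
        Real.rpow_neg_one]
      field_simp
    have hunn : 0 ≤ u ε (ε • y) := by
      rw [hueq]
      exact mul_nonneg (hφb _).1
        (mul_nonneg (Real.rpow_nonneg hε.le _) (hU1pos y).le)
    have habs : |u ε (ε • y)| ^ p
        = φ (ε • y) ^ p * ((ε ^ (-(1:ℝ)/2)) ^ p * U1 y ^ p) := by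
      rw [abs_of_nonneg hunn, hueq,
        Real.mul_rpow (hφb _).1 (mul_nonneg (by positivity) (hU1pos y).le),
        Real.mul_rpow (by positivity) (hU1pos y).le]
    have hone : (ε:ℝ) ^ (3:ℕ) * (ε ^ a2 * (ε ^ (-(1:ℝ)/2)) ^ p) = 1 := by
      rw [← Real.rpow_natCast ε 3, ← Real.rpow_mul hε.le, ← Real.rpow_add hε,
        ← Real.rpow_add hε,
        show ((3:ℕ):ℝ) + (a2 + (-(1:ℝ)/2 * p)) = 0 by push_cast; rw [hpdef]; ring,
        Real.rpow_zero]
    show ε ^ Module.finrank ℝ E3 * (‖ε • y‖ ^ a2 * |u ε (ε • y)| ^ p)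
      = φ (ε • y) ^ p * g y
    rw [hN, Real.mul_rpow hε.le (norm_nonneg y), habs, hgdef, E3.frk]
    simp only []
    linear_combination (φ (ε • y) ^ p * (‖y‖ ^ a2 * U1 y ^ p)) * hone
  -- integrability of the cut-off integrand
  have hφcont : Continuous φ := hφs.continuous
  have hφg_int : ∀ ε : ℝ, 0 < ε →
      Integrable (fun y : E3 => φ (ε • y) ^ p * g y) (volume : Measure E3) := by
    intro ε hε
    have hm : Measurable fun y : E3 => φ (ε • y) ^ p * g y := by
      have h1 : Measurable fun y : E3 => φ (ε • y) := by fun_prop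
      rw [hgdef, hU1eq]
      fun_prop
    refine hgint.mono' hm.aestronglyMeasurable
      (Filter.Eventually.of_forall fun y => ?_)
    rw [Real.norm_eq_abs,
      abs_of_nonneg (mul_nonneg (Real.rpow_nonneg (hφb _).1 p) (hgnn y))]
    have h2 : φ (ε • y) ^ p ≤ 1 := Real.rpow_le_one (hφb _).1 (hφb _).2 hp0.le
    calc φ (ε • y) ^ p * g y ≤ 1 * g y :=
        mul_le_mul_of_nonneg_right h2 (hgnn y)
      _ = g y := one_mul _
  -- main bound
  set vb : ℝ := (volume (Metric.ball (0:E3) 1)).toReal with hvb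
  have hbound : ∀ ε : ℝ, 0 < ε →
      |(∫ x in Metric.ball (0:E3) 1, ‖x‖ ^ a2 * |u ε x| ^ p) - K|
        ≤ c ^ p * (3 * vb * (-((3*ε)⁻¹) ^ (t + 3) / (t + 3))) := by
    intro ε hε
    have hR : (0:ℝ) < (3*ε)⁻¹ := by positivity
    obtain ⟨htint, htval⟩ := tail_rpow_E3 ht3 hR
    have hsetR : MeasurableSet {y : E3 | (3*ε)⁻¹ ≤ ‖y‖} :=
      measurableSet_le measurable_const measurable_norm
    have hmaj : Integrable (fun y : E3 =>
        c ^ p * Set.indicator {y : E3 | (3*ε)⁻¹ ≤ ‖y‖} (fun y : E3 => ‖y‖ ^ t) y)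
        (volume : Measure E3) :=
      ((integrable_indicator_iff hsetR).2 htint).const_mul _
    rw [hscale ε hε, hK, ← integral_sub (hφg_int ε hε) hgint]
    have h4 : |∫ y : E3, (φ (ε • y) ^ p * g y - g y)|
        ≤ ∫ y : E3, c ^ p *
            Set.indicator {y : E3 | (3*ε)⁻¹ ≤ ‖y‖} (fun y : E3 => ‖y‖ ^ t) y := by
      have habs0 := norm_integral_le_integral_norm (μ := (volume : Measure E3))
        (f := fun y : E3 => φ (ε • y) ^ p * g y - g y)
      rw [Real.norm_eq_abs] at habs0
      refine le_trans habs0 ?_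
      refine integral_mono ((hφg_int ε hε).sub hgint).norm hmaj fun y => ?_
      rw [Real.norm_eq_abs]
      by_cases hcase : (3*ε)⁻¹ ≤ ‖y‖
      · have hy0 : 0 < ‖y‖ := lt_of_lt_of_le hR hcase
        have h5 : φ (ε • y) ^ p ≤ 1 := Real.rpow_le_one (hφb _).1 (hφb _).2 hp0.le
        have h6 : 0 ≤ φ (ε • y) ^ p := Real.rpow_nonneg (hφb _).1 p
        have h7 : |φ (ε • y) ^ p * g y - g y| ≤ g y := by
          rw [abs_le]
          constructor <;> nlinarith [hgnn y]
        rw [Set.indicator_of_mem (show y ∈ {y : E3 | (3*ε)⁻¹ ≤ ‖y‖} from hcase)]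
        exact le_trans h7 (hgtail y hy0)
      · have h8 : ‖ε • y‖ ≤ 1/3 := by
          rw [norm_smul, Real.norm_eq_abs, abs_of_pos hε]
          have h9 : ‖y‖ < (3*ε)⁻¹ := lt_of_not_ge hcase
          calc ε * ‖y‖ ≤ ε * (3*ε)⁻¹ :=
              mul_le_mul_of_nonneg_left h9.le hε.le
            _ = 1/3 := by field_simp
        rw [hφ1 _ h8, Real.one_rpow, one_mul, sub_self, abs_zero,
          Set.indicator_of_notMem (show y ∉ {y : E3 | (3*ε)⁻¹ ≤ ‖y‖} from hcase),
          mul_zero]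
    refine le_trans h4 ?_
    rw [integral_const_mul, integral_indicator hsetR, htval]
  -- conclude
  refine ⟨hgint, ?_⟩
  rw [isBigO_iff]
  refine ⟨c ^ p * (3 * vb * (-1 / (t + 3)) * 3 ^ (3 + a2)), ?_⟩
  filter_upwards [self_mem_nhdsWithin] with ε hε
  have hε' : (0:ℝ) < ε := hε
  have h7 := hbound ε hε'
  have hRpow : ((3*ε)⁻¹) ^ (t + 3) = 3 ^ (3+a2) * ε ^ (3+a2) := by
    have h8 : t + 3 = -(3 + a2) := by rw [htdef, hpdef]; ring
    rw [h8, Real.rpow_neg (by positivity), Real.inv_rpow (by positivity),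
      inv_inv, Real.mul_rpow (by norm_num) hε'.le]
  rw [hRpow] at h7
  rw [Real.norm_eq_abs, Real.norm_eq_abs, abs_of_nonneg (Real.rpow_nonneg hε'.le _)]
  calc |(∫ x in Metric.ball (0:E3) 1, ‖x‖ ^ a2 * |u ε x| ^ p) - K|
      ≤ c ^ p * (3 * vb * (-(3 ^ (3+a2) * ε ^ (3+a2)) / (t + 3))) := h7
    _ = c ^ p * (3 * vb * (-1 / (t + 3)) * 3 ^ (3 + a2)) * ε ^ (3 + a2) := by
        ring
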